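/- Conjugate gradient error bound: for an SPD system with condition number κ, the k-th CG iterate satisfies ‖x − x_k‖_A ≤ 2 ((√κ − 1)/(√κ + 1))^k ‖x − x₀‖_A. -/

import Mathlib

open Matrix Polynomial

lemma cheb_deg (k : ℕ) : (Chebyshev.T ℝ (k:ℤ)).natDegree ≤ k := by
  induction k using Nat.twoStepInduction with
  | zero => simp [Chebyshev.T_zero]
  | one => simp [Chebyshev.T_one]
  | more n ih1 ih2 =>
    have key : (Chebyshev.T ℝ ((n:ℤ)+2)).natDegree ≤ n+2 := by
      rw [Chebyshev.T_add_two]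
      refine le_trans (natDegree_sub_le _ _) (max_le ?_ (le_trans ih1 (by omega)))
      refine le_trans natDegree_mul_le ?_
      have h2 : (2*X : ℝ[X]).natDegree ≤ 1 := le_trans natDegree_mul_le (by simp)
      have h3 : (Chebyshev.T ℝ ((n:ℤ)+1)).natDegree ≤ n+1 := by exact_mod_cast ih2
      omega
    exact_mod_cast key

lemma cheb_cosh (k : ℕ) (t : ℝ) :
    (Chebyshev.T ℝ (k:ℤ)).eval (Real.cosh t) = Real.cosh (k*t) := by
  have h := Chebyshev.T_complex_cos (t * Complex.I) (k:ℤ)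
  rw [Complex.cos_mul_I] at h
  have h2 : ((k:ℤ):ℂ) * (↑t * Complex.I) = (((k:ℝ)*t : ℝ):ℂ) * Complex.I := by push_cast; ring
  rw [h2, Complex.cos_mul_I] at h
  have h3 := Chebyshev.complex_ofReal_eval_T (Real.cosh t) (k:ℤ)
  rw [Complex.ofReal_cosh, h, ← Complex.ofReal_cosh] at h3
  exact_mod_cast h3

lemma cheb_abs_le (k : ℕ) (y : ℝ) (hy : y ∈ Set.Icc (-1:ℝ) 1) :
    |(Chebyshev.T ℝ (k:ℤ)).eval y| ≤ 1 := by
  have : y = Real.cos (Real.arccos y) := (Real.cos_arccos hy.1 hy.2).symm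
  rw [this, Chebyshev.T_real_cos]
  exact Real.abs_cos_le_one _

variable {n : ℕ}

lemma myconj_pow (U A : Matrix (Fin n) (Fin n) ℝ) (hU : U * star U = 1)
    (hU' : star U * U = 1) (k : ℕ) :
    star U * A ^ k * U = (star U * A * U) ^ k := by
  induction k with
  | zero => simpa [pow_zero] using hU'
  | succ m ih =>
    rw [pow_succ, pow_succ, ← ih]
    calc star U * (A ^ m * A) * U = (star U * A ^ m) * (U * star U) * (A * U) := by
          rw [hU]; noncomm_ring
      _ = star U * A ^ m * U * (star U * A * U) := by noncomm_ring

lemma myconj_aeval (U A : Matrix (Fin n) (Fin n) ℝ) (hU : U * star U = 1)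
    (hU' : star U * U = 1) (P : ℝ[X]) :
    star U * (aeval A P) * U = aeval (star U * A * U) P := by
  induction P using Polynomial.induction_on' with
  | add p q hp hq => rw [map_add, map_add, ← hp, ← hq]; noncomm_ring
  | monomial m a =>
    rw [aeval_monomial, aeval_monomial, ← myconj_pow U A hU hU' m]
    simp only [Algebra.algebraMap_eq_smul_one, smul_mul_assoc, mul_smul_comm, one_mul]

lemma my_aeval_diagonal (d : Fin n → ℝ) (P : ℝ[X]) :
    aeval (diagonal d) P = diagonal (fun i => P.eval (d i)) := by
  induction P using Polynomial.induction_on' with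
  | add p q hp hq =>
    rw [map_add, hp, hq, diagonal_add]
    congr 1; funext i; simp
  | monomial m a =>
    rw [aeval_monomial, diagonal_pow, Algebra.algebraMap_eq_smul_one, smul_mul_assoc, one_mul]
    ext i j
    by_cases h : i = j <;> simp [diagonal_apply, h, eval_monomial]

lemma spectral_bound (A : Matrix (Fin n) (Fin n) ℝ) (hA : A.PosDef)
    (a c : ℝ) (ha : 0 < a)
    (hspec : ∀ z : Fin n → ℝ, a * (z ⬝ᵥ z) ≤ z ⬝ᵥ A.mulVec z ∧
      z ⬝ᵥ A.mulVec z ≤ c * (z ⬝ᵥ z))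
    (P : ℝ[X]) (M : ℝ) (hM0 : 0 ≤ M)
    (hM : ∀ t ∈ Set.Icc a c, |P.eval t| ≤ M) (v : Fin n → ℝ) :
    ((aeval A P).mulVec v) ⬝ᵥ A.mulVec ((aeval A P).mulVec v) ≤
      M ^ 2 * (v ⬝ᵥ A.mulVec v) := by
  classical
  have hH : A.IsHermitian := hA.isHermitian
  set U : Matrix (Fin n) (Fin n) ℝ := (hH.eigenvectorUnitary : Matrix (Fin n) (Fin n) ℝ) with hUdef
  have hmem := hH.eigenvectorUnitary.2
  rw [Matrix.mem_unitaryGroup_iff] at hmem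
  have hU : U * star U = 1 := hmem
  have hU' : star U * U = 1 := by
    rw [mul_eq_one_comm] at hU; exact hU
  have hofReal : (RCLike.ofReal ∘ hH.eigenvalues : Fin n → ℝ) = hH.eigenvalues :=
    funext fun i => rfl
  have hDiag : star U * A * U = diagonal hH.eigenvalues := by
    have := hH.conjStarAlgAut_star_eigenvectorUnitary
    rw [Unitary.conjStarAlgAut_star_apply] at this
    rw [hofReal] at this
    exact this
  have hAeq : A = U * diagonal hH.eigenvalues * star U := by
    have := hH.spectral_theorem
    rw [Unitary.conjStarAlgAut_apply] at this
    rw [hofReal] at this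
    exact this
  have hμmem : ∀ i, hH.eigenvalues i ∈ Set.Icc a c := by
    intro i
    have hev := hH.mulVec_eigenvectorBasis i
    set ui : Fin n → ℝ := ⇑(hH.eigenvectorBasis i) with huidef
    have h1 : ‖hH.eigenvectorBasis i‖ = 1 := hH.eigenvectorBasis.orthonormal.1 i
    have hnorm : ui ⬝ᵥ ui = 1 := by
      have h2 : (inner (𝕜 := ℝ) (hH.eigenvectorBasis i) (hH.eigenvectorBasis i)) = (1:ℝ) := by
        rw [real_inner_self_eq_norm_sq, h1]; norm_num
      rw [EuclideanSpace.inner_eq_star_dotProduct] at h2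
      simpa using h2
    have hqf : ui ⬝ᵥ A.mulVec ui = hH.eigenvalues i * (ui ⬝ᵥ ui) := by
      rw [hev]
      simp only [dotProduct, Pi.smul_apply, smul_eq_mul, Finset.mul_sum]
      exact Finset.sum_congr rfl fun j _ => by ring
    have h3 := hspec ui
    rw [hqf, hnorm] at h3
    simp only [mul_one] at h3
    exact ⟨h3.1, h3.2⟩
  have hstar : star U = Uᵀ := by
    rw [Matrix.star_eq_conjTranspose, Matrix.conjTranspose_eq_transpose_of_trivial]
  have qf_eq : ∀ z : Fin n → ℝ,
      z ⬝ᵥ A.mulVec z = ∑ i, hH.eigenvalues i * ((star U).mulVec z i) ^ 2 := by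
    intro z
    conv_lhs => rw [hAeq]
    rw [← Matrix.mulVec_mulVec, ← Matrix.mulVec_mulVec, Matrix.dotProduct_mulVec,
      hstar, Matrix.mulVec_transpose]
    simp only [dotProduct, Matrix.mulVec_diagonal]
    exact Finset.sum_congr rfl fun j _ => by ring
  have coord : (star U).mulVec ((aeval A P).mulVec v) =
      fun i => P.eval (hH.eigenvalues i) * ((star U).mulVec v i) := by
    rw [Matrix.mulVec_mulVec]
    have h6 := myconj_aeval U A hU hU' P
    rw [hDiag, my_aeval_diagonal] at h6
    have h5 : star U * (aeval A P) = diagonal (fun i => P.eval (hH.eigenvalues i)) * star U := by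
      calc star U * aeval A P = star U * aeval A P * (U * star U) := by rw [hU, mul_one]
        _ = (star U * aeval A P * U) * star U := by noncomm_ring
        _ = _ := by rw [h6]
    rw [h5, ← Matrix.mulVec_mulVec]
    funext i
    simp [Matrix.mulVec_diagonal]
  rw [qf_eq, qf_eq, coord, Finset.mul_sum]
  apply Finset.sum_le_sum
  intro i _
  have h7 := hM _ (hμmem i)
  have h8 : (0:ℝ) ≤ hH.eigenvalues i := le_trans ha.le (hμmem i).1
  have hp2 : (P.eval (hH.eigenvalues i)) ^ 2 ≤ M ^ 2 := by
    rw [← sq_abs]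
    exact pow_le_pow_left₀ (abs_nonneg _) h7 2
  have hkey : (P.eval (hH.eigenvalues i)) ^ 2 * (hH.eigenvalues i * ((star U).mulVec v i) ^ 2) ≤
      M ^ 2 * (hH.eigenvalues i * ((star U).mulVec v i) ^ 2) :=
    mul_le_mul_of_nonneg_right hp2 (by positivity)
  calc hH.eigenvalues i * ((fun i => P.eval (hH.eigenvalues i) * ((star U).mulVec v i)) i) ^ 2
      = (P.eval (hH.eigenvalues i)) ^ 2 * (hH.eigenvalues i * ((star U).mulVec v i) ^ 2) := by
        ring
    _ ≤ _ := hkey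

lemma key_lemma {k : ℕ} (A : Matrix (Fin n) (Fin n) ℝ) (hA : A.PosDef)
    (a c : ℝ) (ha : 0 < a)
    (hspec : ∀ z : Fin n → ℝ, a * (z ⬝ᵥ z) ≤ z ⬝ᵥ A.mulVec z ∧
      z ⬝ᵥ A.mulVec z ≤ c * (z ⬝ᵥ z))
    (b x x₀ : Fin n → ℝ) (hx : A.mulVec x = b) (xk : Fin n → ℝ)
    (hmin' : ∀ d ∈ Submodule.span ℝ
        {v : Fin n → ℝ | ∃ j < k, v = (A ^ j).mulVec (b - A.mulVec x₀)},
      Real.sqrt ((x - xk) ⬝ᵥ A.mulVec (x - xk)) ≤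
        Real.sqrt ((x - (x₀ + d)) ⬝ᵥ A.mulVec (x - (x₀ + d))))
    (P : ℝ[X]) (hP0 : P.eval 0 = 1) (hdeg : P.natDegree ≤ k)
    (M : ℝ) (hM0 : 0 ≤ M) (hM : ∀ t ∈ Set.Icc a c, |P.eval t| ≤ M) :
    Real.sqrt ((x - xk) ⬝ᵥ A.mulVec (x - xk)) ≤
      M * Real.sqrt ((x - x₀) ⬝ᵥ A.mulVec (x - x₀)) := by
  classical
  set e0 : Fin n → ℝ := x - x₀ with he0
  have hr0 : b - A.mulVec x₀ = A.mulVec e0 := by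
    rw [he0, Matrix.mulVec_sub, hx]
  have hsum : (aeval A P).mulVec e0 =
      e0 + ∑ i ∈ Finset.range k, P.coeff (i+1) • ((A ^ (i+1)).mulVec e0) := by
    rw [Polynomial.aeval_eq_sum_range' (lt_of_le_of_lt hdeg (Nat.lt_succ_self k))]
    have hlin : ∀ (s : Finset ℕ) (f : ℕ → Matrix (Fin n) (Fin n) ℝ),
        (∑ i ∈ s, f i).mulVec e0 = ∑ i ∈ s, (f i).mulVec e0 := by
      intro s f
      induction s using Finset.induction_on with
      | empty => simp [Matrix.zero_mulVec]
      | insert a s hni ih =>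
        rw [Finset.sum_insert hni, Finset.sum_insert hni, Matrix.add_mulVec, ih]
    rw [show (∑ i ∈ Finset.range (k+1), P.coeff i • A ^ i).mulVec e0 =
        ∑ i ∈ Finset.range (k+1), P.coeff i • ((A ^ i).mulVec e0) by
      rw [hlin]
      exact Finset.sum_congr rfl fun i _ => by rw [Matrix.smul_mulVec]]
    rw [Finset.sum_range_succ']
    have h0 : P.coeff 0 = 1 := by rw [Polynomial.coeff_zero_eq_eval_zero]; exact hP0
    rw [h0]
    simp [add_comm]
  set d : Fin n → ℝ := e0 - (aeval A P).mulVec e0 with hd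
  have hdmem : d ∈ Submodule.span ℝ
      {v : Fin n → ℝ | ∃ j < k, v = (A ^ j).mulVec (b - A.mulVec x₀)} := by
    have hdeq : d = ∑ i ∈ Finset.range k,
        (-(P.coeff (i+1))) • ((A ^ i).mulVec (b - A.mulVec x₀)) := by
      rw [hd, hsum]
      have : ∀ i, (A ^ (i+1)).mulVec e0 = (A ^ i).mulVec (b - A.mulVec x₀) := by
        intro i
        rw [hr0, pow_succ, ← Matrix.mulVec_mulVec]
      simp only [this]
      rw [show ∀ u v : Fin n → ℝ, u - (u + v) = -v from fun u v => by abel]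
      rw [← Finset.sum_neg_distrib]
      exact Finset.sum_congr rfl fun i _ => by rw [neg_smul]
    rw [hdeq]
    refine Submodule.sum_mem _ fun i hi => Submodule.smul_mem _ _ ?_
    exact Submodule.subset_span ⟨i, Finset.mem_range.mp hi, rfl⟩
  have herr : x - (x₀ + d) = (aeval A P).mulVec e0 := by
    rw [hd, he0]; abel
  refine le_trans (hmin' d hdmem) ?_
  rw [herr]
  have hb := spectral_bound A hA a c ha hspec P M hM0 hM e0
  have hs := Real.sqrt_le_sqrt hb
  rw [Real.sqrt_mul (by positivity), Real.sqrt_sq hM0] at hs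
  exact hs

lemma tau_bound (k : ℕ) (κ : ℝ) (hκ : 1 < κ) :
    0 < (Polynomial.Chebyshev.T ℝ (k:ℤ)).eval ((κ+1)/(κ-1)) ∧
    ((Polynomial.Chebyshev.T ℝ (k:ℤ)).eval ((κ+1)/(κ-1)))⁻¹ ≤
      2 * ((Real.sqrt κ - 1)/(Real.sqrt κ + 1))^k := by
  set s := Real.sqrt κ with hsdef
  have hs : 1 < s := by
    rw [hsdef, show (1:ℝ) = Real.sqrt 1 by simp]
    exact Real.sqrt_lt_sqrt (by norm_num) hκ
  have hs2 : s^2 = κ := Real.sq_sqrt (by linarith)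
  set rr := (s+1)/(s-1) with hrr
  have hs1 : (0:ℝ) < s - 1 := by linarith
  have hrpos : 0 < rr := div_pos (by linarith) hs1
  have harg : (κ+1)/(κ-1) = Real.cosh (Real.log rr) := by
    rw [Real.cosh_log hrpos, hrr, ← hs2]
    have h1 : s - 1 ≠ 0 := by linarith
    have h2 : s + 1 ≠ 0 := by linarith
    have h3 : s^2 - 1 ≠ 0 := by nlinarith
    field_simp
    ring
  have heval : (Polynomial.Chebyshev.T ℝ (k:ℤ)).eval ((κ+1)/(κ-1)) = (rr^k + (rr^k)⁻¹)/2 := by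
    rw [harg, cheb_cosh, ← Real.log_pow, Real.cosh_log (by positivity)]
  have hτpos : 0 < (Polynomial.Chebyshev.T ℝ (k:ℤ)).eval ((κ+1)/(κ-1)) := by
    rw [heval]; positivity
  refine ⟨hτpos, ?_⟩
  have hge : rr^k/2 ≤ (Polynomial.Chebyshev.T ℝ (k:ℤ)).eval ((κ+1)/(κ-1)) := by
    rw [heval]
    have : 0 ≤ (rr^k)⁻¹ := by positivity
    linarith
  have hinv : ((Polynomial.Chebyshev.T ℝ (k:ℤ)).eval ((κ+1)/(κ-1)))⁻¹ ≤ (rr^k/2)⁻¹ :=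
    inv_anti₀ (by positivity) hge
  refine le_trans hinv ?_
  rw [show (rr^k/2)⁻¹ = 2 * (rr⁻¹)^k by rw [inv_pow]; field_simp]
  have : rr⁻¹ = (s-1)/(s+1) := by rw [hrr, inv_div]
  rw [this]

/-- Conjugate gradient error bound: for an SPD matrix `A` whose spectrum lies in
`[λ_min, λ_max]`, with condition number `κ = λ_max/λ_min`, the `k`-th CG iterate
(characterized by `A`-norm minimization over the affine Krylov space `x₀ + K_k(A,r₀)`)
satisfies `‖x − x_k‖_A ≤ 2 ((√κ−1)/(√κ+1))^k ‖x − x₀‖_A`. -/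
theorem stmt_18 {n : ℕ} (A : Matrix (Fin n) (Fin n) ℝ) (hA : A.PosDef)
    (lamMin lamMax : ℝ) (hmin : 0 < lamMin) (hminmax : lamMin ≤ lamMax)
    (hspec : ∀ z : Fin n → ℝ, lamMin * (z ⬝ᵥ z) ≤ z ⬝ᵥ A.mulVec z ∧
      z ⬝ᵥ A.mulVec z ≤ lamMax * (z ⬝ᵥ z))
    (κ : ℝ) (hκ : κ = lamMax / lamMin)
    (b x x₀ : Fin n → ℝ) (hx : A.mulVec x = b)
    (k : ℕ) (xk : Fin n → ℝ)
    (hKrylov : xk - x₀ ∈ Submodule.span ℝ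
      {v : Fin n → ℝ | ∃ j < k, v = (A ^ j).mulVec (b - A.mulVec x₀)})
    (hmin' : ∀ d ∈ Submodule.span ℝ
        {v : Fin n → ℝ | ∃ j < k, v = (A ^ j).mulVec (b - A.mulVec x₀)},
      Real.sqrt ((x - xk) ⬝ᵥ A.mulVec (x - xk)) ≤
        Real.sqrt ((x - (x₀ + d)) ⬝ᵥ A.mulVec (x - (x₀ + d)))) :
    Real.sqrt ((x - xk) ⬝ᵥ A.mulVec (x - xk)) ≤
      2 * ((Real.sqrt κ - 1) / (Real.sqrt κ + 1)) ^ k *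
        Real.sqrt ((x - x₀) ⬝ᵥ A.mulVec (x - x₀)) := by
  have hsq0 : 0 ≤ Real.sqrt ((x - x₀) ⬝ᵥ A.mulVec (x - x₀)) := Real.sqrt_nonneg _
  rcases Nat.eq_zero_or_pos k with hk0 | hkpos
  · subst hk0
    have h := key_lemma A hA lamMin lamMax hmin hspec b x x₀ hx xk hmin'
      1 (by simp) (by simp) 1 zero_le_one (by intro t _; simp)
    rw [pow_zero]
    linarith
  · rcases eq_or_lt_of_le hminmax with heq | hlt
    · -- degenerate: lamMin = lamMax, κ = 1
      subst heq
      have hκ1 : κ = 1 := by rw [hκ, div_self hmin.ne']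
      have hrhs : (Real.sqrt κ - 1) / (Real.sqrt κ + 1) = 0 := by
        rw [hκ1, Real.sqrt_one]; norm_num
      rw [hrhs, zero_pow hkpos.ne', mul_zero, zero_mul]
      have h := key_lemma A hA lamMin lamMin hmin hspec b x x₀ hx xk hmin'
        (1 - Polynomial.C lamMin⁻¹ * Polynomial.X)
        (by simp)
        (by
          refine le_trans (Polynomial.natDegree_sub_le _ _) ?_
          have h1 : (Polynomial.C lamMin⁻¹ * Polynomial.X : ℝ[X]).natDegree ≤ 1 :=
            le_trans Polynomial.natDegree_mul_le (by simp)
          exact le_trans (max_le (by simp) h1) hkpos)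
        0 le_rfl
        (by
          intro t ht
          rw [Set.Icc_self, Set.mem_singleton_iff] at ht
          subst ht
          simp [inv_mul_cancel₀ hmin.ne'])
      simpa using h
    · -- Chebyshev case
      have hκ1 : 1 < κ := by rw [hκ]; exact (one_lt_div hmin).mpr hlt
      have hca : (0:ℝ) < lamMax - lamMin := by linarith
      obtain ⟨hτpos, hτinv⟩ := tau_bound k κ hκ1
      set τ : ℝ := (Chebyshev.T ℝ (k:ℤ)).eval ((κ+1)/(κ-1)) with hτ
      have hargeq : (lamMax + lamMin)/(lamMax - lamMin) = (κ+1)/(κ-1) := by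
        rw [hκ]
        have h1 : lamMax / lamMin - 1 ≠ 0 := by
          have : (1:ℝ) < lamMax / lamMin := (one_lt_div hmin).mpr hlt
          linarith
        field_simp
      set Q : ℝ[X] := (Chebyshev.T ℝ (k:ℤ)).comp
        (Polynomial.C ((lamMax+lamMin)/(lamMax-lamMin)) -
          Polynomial.C (2/(lamMax-lamMin)) * Polynomial.X) with hQ
      set P : ℝ[X] := Polynomial.C τ⁻¹ * Q with hP
      have hPeval : ∀ t : ℝ, P.eval t = τ⁻¹ *
          (Chebyshev.T ℝ (k:ℤ)).eval
            ((lamMax+lamMin)/(lamMax-lamMin) - 2/(lamMax-lamMin)*t) := by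
        intro t
        simp [hP, hQ, Polynomial.eval_comp]
      have hP0 : P.eval 0 = 1 := by
        rw [hPeval 0]
        simp only [mul_zero, sub_zero]
        rw [hargeq, ← hτ]
        exact inv_mul_cancel₀ hτpos.ne'
      have hdeg : P.natDegree ≤ k := by
        refine le_trans Polynomial.natDegree_mul_le ?_
        rw [Polynomial.natDegree_C, zero_add]
        refine le_trans (Polynomial.natDegree_comp_le) ?_
        have hlin : (Polynomial.C ((lamMax+lamMin)/(lamMax-lamMin)) -
            Polynomial.C (2/(lamMax-lamMin)) * Polynomial.X : ℝ[X]).natDegree ≤ 1 := by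
          refine le_trans (Polynomial.natDegree_sub_le _ _) ?_
          have h1 : (Polynomial.C (2/(lamMax-lamMin)) * Polynomial.X : ℝ[X]).natDegree ≤ 1 :=
            le_trans Polynomial.natDegree_mul_le (by simp)
          simpa using h1
        calc (Chebyshev.T ℝ (k:ℤ)).natDegree * _ ≤ k * 1 :=
              Nat.mul_le_mul (cheb_deg k) hlin
          _ = k := mul_one k
      have hM : ∀ t ∈ Set.Icc lamMin lamMax, |P.eval t| ≤ τ⁻¹ := by
        intro t ht
        rw [hPeval t]
        have hyval : (lamMax+lamMin)/(lamMax-lamMin) - 2/(lamMax-lamMin)*t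
            = (lamMax + lamMin - 2*t)/(lamMax-lamMin) := by
          field_simp
        have hy : (lamMax + lamMin - 2*t)/(lamMax-lamMin) ∈ Set.Icc (-1:ℝ) 1 := by
          constructor
          · rw [le_div_iff₀ hca]; rcases ht with ⟨h1, h2⟩; linarith
          · rw [div_le_one hca]; rcases ht with ⟨h1, h2⟩; linarith
        rw [hyval, abs_mul, abs_of_pos (inv_pos.mpr hτpos)]
        calc τ⁻¹ * |(Chebyshev.T ℝ (k:ℤ)).eval _| ≤ τ⁻¹ * 1 :=
              mul_le_mul_of_nonneg_left (cheb_abs_le k _ hy) (inv_pos.mpr hτpos).le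
          _ = τ⁻¹ := mul_one _
      have h := key_lemma A hA lamMin lamMax hmin hspec b x x₀ hx xk hmin'
        P hP0 hdeg τ⁻¹ (inv_pos.mpr hτpos).le hM
      refine le_trans h ?_
      exact mul_le_mul_of_nonneg_right hτinv hsq0
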